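/- Let O be a finite set, let (m_j)_{j∈O} and (μ_j)_{j∈O} be families of nonnegative real numbers, let Nr be a real number, and let O_m = {j ∈ O : m_j > 0}. Then the following are equivalent: (i) for every subset S ⊆ O_m, ∑_{j∈O∖S} μ_j ≤ Nr − ∑_{j∈S} m_j; (ii) ∑_{j∈O} max{m_j, μ_j} ≤ Nr. -/
import Mathlib


/-- For nonnegative families `m` and `μ` over a finite index set,
the family of inequalities `∑_{j ∉ S} μ_j ≤ Nr − ∑_{j ∈ S} m_j` for all
`S ⊆ O_m = {j : m_j > 0}` is equivalent to the single inequality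
`∑_j max{m_j, μ_j} ≤ Nr`. -/
theorem MinIII_iff_MinIV
    {O : Type*} [Fintype O] [DecidableEq O]
    (m μ : O → ℝ) (hm : ∀ j, 0 ≤ m j) (hμ : ∀ j, 0 ≤ μ j) (Nr : ℝ) :
    (∀ S : Finset O, (∀ j ∈ S, 0 < m j) →
        ∑ j ∈ Sᶜ, μ j ≤ Nr - ∑ j ∈ S, m j) ↔
      ∑ j, max (m j) (μ j) ≤ Nr := by
  constructor
  · intro h
    set S : Finset O := Finset.univ.filter (fun j => μ j < m j) with hS
    have hpos : ∀ j ∈ S, 0 < m j := by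
      intro j hj
      have := (Finset.mem_filter.mp hj).2
      exact lt_of_le_of_lt (hμ j) this
    have := h S hpos
    have key : ∑ j, max (m j) (μ j) = ∑ j ∈ S, m j + ∑ j ∈ Sᶜ, μ j := by
      rw [← Finset.sum_add_sum_compl S (fun j => max (m j) (μ j))]
      congr 1
      · exact Finset.sum_congr rfl fun j hj =>
          max_eq_left (le_of_lt (Finset.mem_filter.mp hj).2)
      · refine Finset.sum_congr rfl fun j hj => ?_
        have : ¬ μ j < m j := by
          simp only [hS, Finset.mem_compl, Finset.mem_filter, Finset.mem_univ,
            true_and] at hj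
          exact hj
        exact max_eq_right (le_of_not_gt this)
    linarith
  · intro h S _
    have key : ∑ j ∈ S, m j + ∑ j ∈ Sᶜ, μ j ≤ ∑ j, max (m j) (μ j) := by
      rw [← Finset.sum_add_sum_compl S (fun j => max (m j) (μ j))]
      exact add_le_add (Finset.sum_le_sum fun j _ => le_max_left _ _)
        (Finset.sum_le_sum fun j _ => le_max_right _ _)
    linarith
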